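/- (Corollary 4.3.) Fix μ > 1. Let g ∈ C_2([0,T];V) be such that δg ∈ C_3^μ([0,T];V), i.e. N[δg;C_3^μ] < ∞, and let Λ(δg) ∈ C_2^μ([0,T];V) be the unique element with δ(Λ(δg)) = δg given by the sewing map. Define f : [0,T] → V by f_t := g_{0t} − (Λ(δg))_{0t}, so that (δf)_{st} = g_{st} − (Λ(δg))_{st}. Then for all 0 ≤ s < t ≤ T, f_t − f_s is the limit of Riemann sums along partitions: for every ε > 0 there exists η > 0 such that for every partition s = t_0 < t_1 < … < t_n = t of [s,t] with max_i (t_{i+1} − t_i) < η one has ‖(f_t − f_s) − Σ_{i=0}^{n−1} g_{t_i t_{i+1}}‖ < ε. -/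

import Mathlib

open scoped BigOperators

/-- Corollary 4.3: Riemann-sum description of `(Id − Λδ)g`.
Fix `μ > 1`. Let `g ∈ C₂([0,T];V)` with `δg ∈ C₃^μ` (witnessed by a finite
decomposition with Hölder bounds), and let `L = Λ(δg) ∈ C₂^μ` be the element given by
the sewing map, i.e. `δL = δg` and `‖L_{st}‖ ≤ C (t−s)^μ`. Define
`f_t := g_{0t} − L_{0t}` (so that `(δf)_{st} = g_{st} − L_{st}`). Then for all
`0 ≤ s < t ≤ T`, `f_t − f_s` is the limit of the Riemann sums `∑ᵢ g_{tᵢ t_{i+1}}`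
along partitions of `[s,t]` with mesh tending to `0`. -/
theorem riemann_sum_representation
    {V : Type*} [NormedAddCommGroup V] [NormedSpace ℝ V] [CompleteSpace V]
    (T μ : ℝ) (hT : 0 < T) (hμ : 1 < μ)
    (g : ℝ → ℝ → V)
    (hgcont : ContinuousOn (fun p : ℝ × ℝ => g p.1 p.2)
      {p : ℝ × ℝ | 0 ≤ p.1 ∧ p.1 ≤ p.2 ∧ p.2 ≤ T})
    (hgdiag : ∀ t ∈ Set.Icc (0 : ℝ) T, g t t = 0)
    -- `δg ∈ C₃^μ([0,T];V)`, i.e. `N[δg; C₃^μ] < ∞`: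
    (hfin : ∃ (n : ℕ) (hs : Fin n → ℝ → ℝ → ℝ → V) (αs Cs : Fin n → ℝ),
      (∀ i, 0 < αs i ∧ αs i < μ) ∧
      (∀ s u t : ℝ, 0 ≤ s → s ≤ u → u ≤ t → t ≤ T →
        g s t - g s u - g u t = ∑ i, hs i s u t) ∧
      (∀ i, ∀ s u t : ℝ, 0 ≤ s → s < u → u < t → t ≤ T →
        ‖hs i s u t‖ ≤ Cs i * (t - u) ^ αs i * (u - s) ^ (μ - αs i)))
    -- `L = Λ(δg)` is the unique element of `C₂^μ` with `δL = δg`: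
    (L : ℝ → ℝ → V)
    (hL : ∃ C : ℝ, ∀ s t : ℝ, 0 ≤ s → s ≤ t → t ≤ T → ‖L s t‖ ≤ C * (t - s) ^ μ)
    (hdL : ∀ s u t : ℝ, 0 ≤ s → s ≤ u → u ≤ t → t ≤ T →
      L s t - L s u - L u t = g s t - g s u - g u t)
    -- `f_t := g_{0t} − L_{0t}`:
    (f : ℝ → V) (hf : ∀ t ∈ Set.Icc (0 : ℝ) T, f t = g 0 t - L 0 t)
    (s t : ℝ) (hs : 0 ≤ s) (hst : s < t) (ht : t ≤ T)
    (ε : ℝ) (hε : 0 < ε) :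
    ∃ η > (0 : ℝ), ∀ (n : ℕ) (p : ℕ → ℝ), 0 < n →
      p 0 = s → p n = t →
      (∀ i < n, p i < p (i + 1)) →
      (∀ i < n, p (i + 1) - p i < η) →
      ‖(f t - f s) - ∑ i ∈ Finset.range n, g (p i) (p (i + 1))‖ < ε := by

  obtain ⟨C, hC⟩ := hL
  set C' : ℝ := max C 0 with hC'def
  have hC'0 : (0:ℝ) ≤ C' := le_max_right _ _
  have hC' : ∀ a b : ℝ, 0 ≤ a → a ≤ b → b ≤ T → ‖L a b‖ ≤ C' * (b - a) ^ μ := by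
    intro a b ha hab hbT
    refine le_trans (hC a b ha hab hbT) ?_
    exact mul_le_mul_of_nonneg_right (le_max_left _ _) (Real.rpow_nonneg (by linarith) _)
  have hts : (0:ℝ) < t - s := by linarith
  have hμ1 : (0:ℝ) < μ - 1 := by linarith
  have hεq : (0:ℝ) < ε / ((C' + 1) * (t - s)) := by positivity
  set η : ℝ := min 1 ((ε / ((C' + 1) * (t - s))) ^ (1 / (μ - 1))) with hηdef
  have hη0 : 0 < η := lt_min one_pos (Real.rpow_pos_of_pos hεq _)
  have hηpow : η ^ (μ - 1) ≤ ε / ((C' + 1) * (t - s)) := by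
    have h1 : η ≤ (ε / ((C' + 1) * (t - s))) ^ (1 / (μ - 1)) := min_le_right _ _
    have h2 : η ^ (μ - 1) ≤ ((ε / ((C' + 1) * (t - s))) ^ (1 / (μ - 1))) ^ (μ - 1) :=
      Real.rpow_le_rpow hη0.le h1 hμ1.le
    have h3 : ((ε / ((C' + 1) * (t - s))) ^ (1 / (μ - 1))) ^ (μ - 1)
        = ε / ((C' + 1) * (t - s)) := by
      rw [← Real.rpow_mul hεq.le, one_div, inv_mul_cancel₀ (ne_of_gt hμ1), Real.rpow_one]
    rwa [h3] at h2
  refine ⟨η, hη0, ?_⟩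
  intro n p hn hp0 hpn hmono hmesh
  have hmono' : ∀ i j, i ≤ j → j ≤ n → p i ≤ p j := by
    intro i j hij hjn
    induction j with
    | zero => simp [Nat.le_zero.mp hij]
    | succ k ih =>
      rcases Nat.lt_or_ge i (k + 1) with h | h
      · exact le_trans (ih (Nat.lt_succ_iff.mp h) (Nat.le_of_succ_le hjn))
          (le_of_lt (hmono k (Nat.lt_of_succ_le hjn)))
      · have : i = k + 1 := le_antisymm hij h
        simp [this]
  have hbounds : ∀ i, i ≤ n → 0 ≤ p i ∧ p i ≤ T := by
    intro i hi
    constructor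
    · have := hmono' 0 i (Nat.zero_le i) hi
      rw [hp0] at this; linarith
    · have := hmono' i n hi le_rfl
      rw [hpn] at this; linarith
  have hstep : ∀ i < n, f (p (i + 1)) - f (p i) = g (p i) (p (i + 1)) - L (p i) (p (i + 1)) := by
    intro i hi
    have hin1 : i + 1 ≤ n := hi
    have h0i := (hbounds i hi.le).1
    have hiT := (hbounds i hi.le).2
    have h0i1 := (hbounds (i + 1) hin1).1
    have hi1T := (hbounds (i + 1) hin1).2
    have hlt := (hmono i hi).le
    have hfi := hf (p i) ⟨h0i, hiT⟩
    have hfi1 := hf (p (i + 1)) ⟨h0i1, hi1T⟩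
    have hd := hdL 0 (p i) (p (i + 1)) le_rfl h0i hlt hi1T
    rw [hfi, hfi1]
    have key : (g 0 (p (i + 1)) - L 0 (p (i + 1)) - (g 0 (p i) - L 0 (p i)))
        - (g (p i) (p (i + 1)) - L (p i) (p (i + 1)))
        = (g 0 (p (i + 1)) - g 0 (p i) - g (p i) (p (i + 1)))
          - (L 0 (p (i + 1)) - L 0 (p i) - L (p i) (p (i + 1))) := by abel
    have h0 : (g 0 (p (i + 1)) - L 0 (p (i + 1)) - (g 0 (p i) - L 0 (p i)))
        - (g (p i) (p (i + 1)) - L (p i) (p (i + 1))) = 0 := by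
      rw [key, ← hd, sub_self]
    exact sub_eq_zero.mp h0
  have htele : ∑ i ∈ Finset.range n, (f (p (i + 1)) - f (p i)) = f (p n) - f (p 0) :=
    Finset.sum_range_sub (fun i => f (p i)) n
  have hsum : f t - f s - ∑ i ∈ Finset.range n, g (p i) (p (i + 1))
      = - ∑ i ∈ Finset.range n, L (p i) (p (i + 1)) := by
    have hcongr : ∀ i ∈ Finset.range n,
        f (p (i + 1)) - f (p i) - g (p i) (p (i + 1)) = - L (p i) (p (i + 1)) := by
      intro i hi
      rw [hstep i (Finset.mem_range.mp hi)]; abel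
    calc f t - f s - ∑ i ∈ Finset.range n, g (p i) (p (i + 1))
        = ∑ i ∈ Finset.range n, (f (p (i + 1)) - f (p i) - g (p i) (p (i + 1))) := by
          rw [Finset.sum_sub_distrib, htele, hp0, hpn]
      _ = ∑ i ∈ Finset.range n, - L (p i) (p (i + 1)) := Finset.sum_congr rfl hcongr
      _ = - ∑ i ∈ Finset.range n, L (p i) (p (i + 1)) := by
          rw [Finset.sum_neg_distrib]
  rw [hsum, norm_neg]
  have hterm : ∀ i ∈ Finset.range n,
      ‖L (p i) (p (i + 1))‖ ≤ C' * η ^ (μ - 1) * (p (i + 1) - p i) := by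
    intro i hi
    have hi' := Finset.mem_range.mp hi
    have hin1 : i + 1 ≤ n := hi'
    have h0i := (hbounds i hi'.le).1
    have hi1T := (hbounds (i + 1) hin1).2
    have hlt := hmono i hi'
    have hΔ : 0 < p (i + 1) - p i := by linarith
    have hΔη : p (i + 1) - p i ≤ η := (hmesh i hi').le
    have h1 : ‖L (p i) (p (i + 1))‖ ≤ C' * (p (i + 1) - p i) ^ μ :=
      hC' _ _ h0i hlt.le hi1T
    have h2 : (p (i + 1) - p i) ^ μ = (p (i + 1) - p i) ^ (μ - 1) * (p (i + 1) - p i) := by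
      have h := Real.rpow_add hΔ (μ - 1) 1
      rw [Real.rpow_one] at h
      rw [← h]
      norm_num
    have h3 : (p (i + 1) - p i) ^ (μ - 1) ≤ η ^ (μ - 1) :=
      Real.rpow_le_rpow hΔ.le hΔη hμ1.le
    calc ‖L (p i) (p (i + 1))‖ ≤ C' * (p (i + 1) - p i) ^ μ := h1
      _ = C' * ((p (i + 1) - p i) ^ (μ - 1) * (p (i + 1) - p i)) := by rw [h2]
      _ ≤ C' * (η ^ (μ - 1) * (p (i + 1) - p i)) := by
          apply mul_le_mul_of_nonneg_left _ hC'0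
          exact mul_le_mul_of_nonneg_right h3 hΔ.le
      _ = C' * η ^ (μ - 1) * (p (i + 1) - p i) := by ring
  have hnorm : ‖∑ i ∈ Finset.range n, L (p i) (p (i + 1))‖
      ≤ C' * η ^ (μ - 1) * (t - s) := by
    calc ‖∑ i ∈ Finset.range n, L (p i) (p (i + 1))‖
        ≤ ∑ i ∈ Finset.range n, ‖L (p i) (p (i + 1))‖ := norm_sum_le _ _
      _ ≤ ∑ i ∈ Finset.range n, C' * η ^ (μ - 1) * (p (i + 1) - p i) :=
          Finset.sum_le_sum hterm
      _ = C' * η ^ (μ - 1) * ∑ i ∈ Finset.range n, (p (i + 1) - p i) := by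
          rw [Finset.mul_sum]
      _ = C' * η ^ (μ - 1) * (t - s) := by
          rw [Finset.sum_range_sub (fun i => p i) n, hp0, hpn]
  have hfinal : C' * η ^ (μ - 1) * (t - s) < ε := by
    have hle : C' * η ^ (μ - 1) * (t - s) ≤ C' * (ε / ((C' + 1) * (t - s))) * (t - s) := by
      apply mul_le_mul_of_nonneg_right _ hts.le
      exact mul_le_mul_of_nonneg_left hηpow hC'0
    have heq : C' * (ε / ((C' + 1) * (t - s))) * (t - s) = C' / (C' + 1) * ε := by
      field_simp
    rw [heq] at hle
    have : C' / (C' + 1) < 1 := by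
      rw [div_lt_one (by linarith)]; linarith
    nlinarith
  exact lt_of_le_of_lt hnorm hfinal
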